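/- ∫₀^∞ (sin t)⁴/t³ dt = ln 2. -/

import Mathlib

open Real Filter MeasureTheory intervalIntegral Topology

noncomputable def kk : ℝ → ℝ := fun u => (Real.cos u - 1) / u
noncomputable def mm : ℝ → ℝ := fun t => (Real.cos (2*t) - Real.cos (4*t)) / t
noncomputable def ff : ℝ → ℝ := fun t => (Real.sin t) ^ 4 / t ^ 3

lemma one_sub_cos_le (x : ℝ) : 1 - Real.cos x ≤ x ^ 2 / 2 := by
  have hx : Real.cos x = Real.cos (x/2) ^ 2 - Real.sin (x/2) ^ 2 := by
    rw [← Real.cos_two_mul']; ring_nf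
  have h1 := Real.sin_sq_add_cos_sq (x/2)
  have h2 : Real.sin (x/2) ^ 2 ≤ (x/2) ^ 2 := by
    rw [← sq_abs, ← sq_abs (x/2)]
    exact pow_le_pow_left₀ (abs_nonneg _) Real.abs_sin_le_abs 2
  nlinarith

lemma kk_abs (u : ℝ) : |kk u| ≤ |u| / 2 := by
  unfold kk
  rcases eq_or_ne u 0 with rfl | hu
  · simp
  · rw [abs_div]
    have h1 : |Real.cos u - 1| = 1 - Real.cos u := by
      rw [abs_sub_comm, abs_of_nonneg]; linarith [Real.cos_le_one u]
    have h2 := one_sub_cos_le u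
    have h3 : (0:ℝ) < |u| := abs_pos.mpr hu
    rw [h1, div_le_div_iff₀ h3 two_pos]
    nlinarith [sq_abs u]

lemma kk_cont : Continuous kk := by
  rw [continuous_iff_continuousAt]; intro x
  rcases eq_or_ne x 0 with rfl | hx
  · have h0 : kk 0 = 0 := by simp [kk]
    rw [ContinuousAt, h0]
    apply squeeze_zero_norm kk_abs
    have : Tendsto (fun u : ℝ => |u| / 2) (𝓝 0) (𝓝 (|(0:ℝ)|/2)) :=
      ((continuous_abs : Continuous fun x : ℝ => |x|).div_const 2).tendsto 0
    simpa using this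
  · exact ((Real.continuous_cos.sub continuous_const).continuousAt).div continuousAt_id hx

lemma mm_eq : mm = fun t => 2 * kk (2*t) - 4 * kk (4*t) := by
  funext t; unfold mm kk
  rcases eq_or_ne t 0 with rfl | ht
  · simp
  · field_simp; ring

lemma mm_cont : Continuous mm := by
  rw [mm_eq]
  exact (continuous_const.mul (kk_cont.comp (continuous_const.mul continuous_id))).sub
    (continuous_const.mul (kk_cont.comp (continuous_const.mul continuous_id)))

lemma ff_abs (t : ℝ) : |ff t| ≤ |t| := by
  unfold ff
  rcases eq_or_ne t 0 with rfl | ht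
  · simp
  · rw [abs_div]
    have h3 : (0:ℝ) < |t| := abs_pos.mpr ht
    have h4 : |Real.sin t ^ 4| = |Real.sin t| ^ 4 := by rw [abs_pow]
    have h5 : |t ^ 3| = |t| ^ 3 := by rw [abs_pow]
    rw [h4, h5, div_le_iff₀ (by positivity)]
    have h6 : |Real.sin t| ^ 4 ≤ |t| ^ 4 := pow_le_pow_left₀ (abs_nonneg _) Real.abs_sin_le_abs 4
    nlinarith

lemma ff_cont : Continuous ff := by
  rw [continuous_iff_continuousAt]; intro x
  rcases eq_or_ne x 0 with rfl | hx
  · have h0 : ff 0 = 0 := by simp [ff]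
    rw [ContinuousAt, h0]
    apply squeeze_zero_norm ff_abs
    simpa using (continuous_abs : Continuous fun x : ℝ => |x|).tendsto 0
  · exact ((Real.continuous_sin.pow 4).continuousAt).div
      ((continuous_id.pow 3).continuousAt) (pow_ne_zero 3 hx)

lemma C_eq (X : ℝ) (hX : 0 < X) :
    (∫ t in (0:ℝ)..X, mm t) = Real.log 2 - ∫ u in (2*X)..(4*X), Real.cos u / u := by
  have hcomp : ∀ c : ℝ, (∫ t in (0:ℝ)..X, c * kk (c*t)) = ∫ u in (0:ℝ)..(c*X), kk u := by
    intro c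
    rw [intervalIntegral.integral_const_mul]
    have := intervalIntegral.smul_integral_comp_mul_left kk c (a := 0) (b := X)
    simpa [smul_eq_mul] using this
  have hint : ∀ a b : ℝ, IntervalIntegrable (fun t => 2 * kk (2*t)) volume a b := by
    intro a b
    exact (continuous_const.mul (kk_cont.comp (continuous_const.mul continuous_id))).intervalIntegrable a b
  have hint4 : ∀ a b : ℝ, IntervalIntegrable (fun t => 4 * kk (4*t)) volume a b := by
    intro a b
    exact (continuous_const.mul (kk_cont.comp (continuous_const.mul continuous_id))).intervalIntegrable a b
  have h1 : (∫ t in (0:ℝ)..X, mm t)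
      = (∫ u in (0:ℝ)..(2*X), kk u) - ∫ u in (0:ℝ)..(4*X), kk u := by
    rw [mm_eq, intervalIntegral.integral_sub (hint 0 X) (hint4 0 X), hcomp 2, hcomp 4]
  have h2 : (∫ u in (0:ℝ)..(2*X), kk u) + (∫ u in (2*X)..(4*X), kk u) = ∫ u in (0:ℝ)..(4*X), kk u :=
    intervalIntegral.integral_add_adjacent_intervals (kk_cont.intervalIntegrable _ _)
      (kk_cont.intervalIntegrable _ _)
  have h3 : (∫ u in (2*X)..(4*X), kk u)
      = (∫ u in (2*X)..(4*X), Real.cos u / u) - ∫ u in (2*X)..(4*X), 1 / u := by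
    rw [← intervalIntegral.integral_sub]
    · apply intervalIntegral.integral_congr
      intro u hu
      have h2X : 2*X ≤ 4*X := by linarith
      rw [Set.uIcc_of_le h2X] at hu
      have hu0 : 0 < u := lt_of_lt_of_le (by linarith) hu.1
      unfold kk
      field_simp
    · apply ContinuousOn.intervalIntegrable
      apply ContinuousOn.div Real.continuous_cos.continuousOn continuousOn_id
      intro u hu
      have h2X : 2*X ≤ 4*X := by linarith
      rw [Set.uIcc_of_le h2X] at hu
      exact ne_of_gt (lt_of_lt_of_le (by linarith) hu.1)
    · apply ContinuousOn.intervalIntegrable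
      apply ContinuousOn.div continuousOn_const continuousOn_id
      intro u hu
      have h2X : 2*X ≤ 4*X := by linarith
      rw [Set.uIcc_of_le h2X] at hu
      exact ne_of_gt (lt_of_lt_of_le (by linarith) hu.1)
  have h4 : (∫ u in (2*X)..(4*X), 1 / u) = Real.log 2 := by
    rw [integral_one_div_of_pos (by linarith) (by linarith)]
    congr 1
    field_simp
    ring
  linarith [h1, h2, h3, h4]

lemma E_tendsto : Tendsto (fun X : ℝ => ∫ u in (2*X)..(4*X), Real.cos u / u) atTop (𝓝 0) := by
  apply squeeze_zero_norm' (a := fun X : ℝ => 2 / X)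
  · filter_upwards [eventually_ge_atTop (1:ℝ)] with X hX
    have hX0 : (0:ℝ) < X := by linarith
    have h2X : (0:ℝ) < 2*X := by linarith
    have hle : 2*X ≤ 4*X := by linarith
    have hpos : ∀ u ∈ Set.uIcc (2*X) (4*X), 0 < u := by
      intro u hu
      rw [Set.uIcc_of_le hle] at hu
      linarith [hu.1]
    have hderiv : ∀ u ∈ Set.uIcc (2*X) (4*X),
        HasDerivAt (fun v => Real.sin v / v) (Real.cos u / u - Real.sin u / u^2) u := by
      intro u hu
      have hu0 : u ≠ 0 := ne_of_gt (hpos u hu)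
      have := (Real.hasDerivAt_sin u).div (hasDerivAt_id u) hu0
      refine this.congr_deriv ?_
      simp only [id]
      field_simp
    have hintegr : IntervalIntegrable (fun u => Real.cos u / u - Real.sin u / u^2) volume (2*X) (4*X) := by
      apply ContinuousOn.intervalIntegrable
      apply ContinuousOn.sub
      · exact ContinuousOn.div Real.continuous_cos.continuousOn continuousOn_id
          (fun u hu => ne_of_gt (hpos u hu))
      · exact ContinuousOn.div Real.continuous_sin.continuousOn (continuousOn_id.pow 2)
          (fun u hu => pow_ne_zero 2 (ne_of_gt (hpos u hu)))
    have hftc := intervalIntegral.integral_eq_sub_of_hasDerivAt hderiv hintegr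
    have hintegr2 : IntervalIntegrable (fun u => Real.sin u / u^2) volume (2*X) (4*X) := by
      apply ContinuousOn.intervalIntegrable
      exact ContinuousOn.div Real.continuous_sin.continuousOn (continuousOn_id.pow 2)
        (fun u hu => pow_ne_zero 2 (ne_of_gt (hpos u hu)))
    have hintegr1 : IntervalIntegrable (fun u => Real.cos u / u) volume (2*X) (4*X) := by
      apply ContinuousOn.intervalIntegrable
      exact ContinuousOn.div Real.continuous_cos.continuousOn continuousOn_id
        (fun u hu => ne_of_gt (hpos u hu))
    have hsplit : (∫ u in (2*X)..(4*X), Real.cos u / u)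
        = (Real.sin (4*X) / (4*X) - Real.sin (2*X) / (2*X)) + ∫ u in (2*X)..(4*X), Real.sin u / u^2 := by
      rw [← hftc, intervalIntegral.integral_sub hintegr1 hintegr2]
      ring
    have hb : ‖∫ u in (2*X)..(4*X), Real.sin u / u^2‖ ≤ (2*X)⁻¹ := by
      have hC : ‖∫ u in (2*X)..(4*X), Real.sin u / u^2‖ ≤ (4*X^2)⁻¹ * |4*X - 2*X| := by
        apply intervalIntegral.norm_integral_le_of_norm_le_const
        intro u hu
        rw [Set.uIoc_of_le hle] at hu
        have hu0 : 2*X < u := hu.1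
        have hu1 : 0 < u := lt_trans h2X hu0
        rw [Real.norm_eq_abs, abs_div, abs_of_nonneg (by positivity : (0:ℝ) ≤ u^2)]
        rw [div_le_iff₀ (by positivity)]
        have h5 : |Real.sin u| ≤ 1 := Real.abs_sin_le_one u
        have h6 : 4*X^2 ≤ u^2 := by nlinarith
        calc |Real.sin u| ≤ 1 := h5
          _ ≤ (4*X^2)⁻¹ * u^2 := by
              rw [inv_mul_eq_div, le_div_iff₀ (by positivity)]
              nlinarith
      have habs : |4*X - 2*X| = 2*X := by
        rw [abs_of_nonneg (by linarith)]; ring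
      rw [habs] at hC
      calc ‖∫ u in (2*X)..(4*X), Real.sin u / u^2‖ ≤ (4*X^2)⁻¹ * (2*X) := hC
        _ = (2*X)⁻¹ := by field_simp; ring
    rw [hsplit]
    have h7 : |Real.sin (4*X) / (4*X)| ≤ (4*X)⁻¹ := by
      rw [abs_div, abs_of_pos (by linarith : (0:ℝ) < 4*X), div_le_iff₀ (by linarith : (0:ℝ) < 4*X),
        inv_mul_cancel₀ (by linarith : (4*X) ≠ 0)]
      exact Real.abs_sin_le_one _
    have h8 : |Real.sin (2*X) / (2*X)| ≤ (2*X)⁻¹ := by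
      rw [abs_div, abs_of_pos h2X, div_le_iff₀ h2X, inv_mul_cancel₀ (ne_of_gt h2X)]
      exact Real.abs_sin_le_one _
    have h9 := norm_add_le (Real.sin (4*X) / (4*X) - Real.sin (2*X) / (2*X))
      (∫ u in (2*X)..(4*X), Real.sin u / u^2)
    have h10 : ‖Real.sin (4*X) / (4*X) - Real.sin (2*X) / (2*X)‖ ≤ (4*X)⁻¹ + (2*X)⁻¹ := by
      calc ‖Real.sin (4*X) / (4*X) - Real.sin (2*X) / (2*X)‖
          ≤ ‖Real.sin (4*X) / (4*X)‖ + ‖Real.sin (2*X) / (2*X)‖ := norm_sub_le _ _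
        _ ≤ (4*X)⁻¹ + (2*X)⁻¹ := by rw [Real.norm_eq_abs, Real.norm_eq_abs]; exact add_le_add h7 h8
    have h11 : (4*X)⁻¹ + (2*X)⁻¹ + (2*X)⁻¹ ≤ 2 / X := by
      rw [div_eq_mul_inv]
      have hX0' : (0:ℝ) < X⁻¹ := by positivity
      have e1 : (4*X)⁻¹ = 4⁻¹ * X⁻¹ := by rw [mul_inv]
      have e2 : (2*X)⁻¹ = 2⁻¹ * X⁻¹ := by rw [mul_inv]
      rw [e1, e2]
      nlinarith
    calc ‖Real.sin (4*X) / (4*X) - Real.sin (2*X) / (2*X) + ∫ u in (2*X)..(4*X), Real.sin u / u^2‖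
        ≤ ‖Real.sin (4*X) / (4*X) - Real.sin (2*X) / (2*X)‖ + ‖∫ u in (2*X)..(4*X), Real.sin u / u^2‖ := h9
      _ ≤ ((4*X)⁻¹ + (2*X)⁻¹) + (2*X)⁻¹ := add_le_add h10 hb
      _ ≤ 2 / X := h11
  · have : Tendsto (fun X : ℝ => 2 * X⁻¹) atTop (𝓝 (2 * 0)) :=
      tendsto_inv_atTop_zero.const_mul 2
    simpa [div_eq_mul_inv] using this

noncomputable def RR : ℝ → ℝ := fun Y =>
  -(Real.sin Y ^ 4 / (2*Y^2)) - (Real.sin (2*Y) - Real.sin (4*Y)/2) / (2*Y)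
    + ∫ t in (0:ℝ)..Y, mm t

lemma trig_id (x : ℝ) : Real.sin (2*x) - Real.sin (4*x)/2 = 4 * Real.sin x ^ 3 * Real.cos x := by
  have h4 : (4:ℝ)*x = 2*(2*x) := by ring
  rw [h4]
  simp only [Real.sin_two_mul, Real.cos_two_mul]
  have h := Real.sin_sq_add_cos_sq x
  linear_combination (-(4*Real.sin x*Real.cos x)) * h

lemma RR_hasDeriv (X : ℝ) (hX : 0 < X) : HasDerivAt RR (ff X) X := by
  have hX0 : X ≠ 0 := ne_of_gt hX
  have h2X2 : (2*X^2 : ℝ) ≠ 0 := by positivity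
  have h2X : (2*X : ℝ) ≠ 0 := by positivity
  -- A
  have hA : HasDerivAt (fun Y : ℝ => Real.sin Y ^ 4 / (2*Y^2))
      ((4 * Real.sin X ^ 3 * Real.cos X * (2*X^2) - Real.sin X ^ 4 * (4*X)) / (2*X^2)^2) X := by
    have h1 : HasDerivAt (fun Y : ℝ => Real.sin Y ^ 4) (4 * Real.sin X ^ 3 * Real.cos X) X := by
      have := (Real.hasDerivAt_sin X).pow 4
      refine this.congr_deriv ?_
      all_goals push_cast; ring
    have h2 : HasDerivAt (fun Y : ℝ => 2*Y^2) (4*X) X := by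
      have := (hasDerivAt_pow 2 X).const_mul (2:ℝ)
      refine this.congr_deriv ?_
      all_goals push_cast; ring
    exact h1.div h2 h2X2
  -- B
  have hB : HasDerivAt (fun Y : ℝ => (Real.sin (2*Y) - Real.sin (4*Y)/2) / (2*Y))
      (((Real.cos (2*X) * 2 - Real.cos (4*X) * 4 / 2) * (2*X)
          - (Real.sin (2*X) - Real.sin (4*X)/2) * 2) / (2*X)^2) X := by
    have hs2 : HasDerivAt (fun Y : ℝ => Real.sin (2*Y)) (Real.cos (2*X) * 2) X := by
      have hl : HasDerivAt (fun Y : ℝ => 2*Y) 2 X := by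
        simpa using (hasDerivAt_id X).const_mul (2:ℝ)
      exact hl.sin
    have hs4 : HasDerivAt (fun Y : ℝ => Real.sin (4*Y) / 2) (Real.cos (4*X) * 4 / 2) X := by
      have hl : HasDerivAt (fun Y : ℝ => 4*Y) 4 X := by
        simpa using (hasDerivAt_id X).const_mul (4:ℝ)
      exact hl.sin.div_const 2
    have hden : HasDerivAt (fun Y : ℝ => 2*Y) 2 X := by
      simpa using (hasDerivAt_id X).const_mul (2:ℝ)
    exact (hs2.sub hs4).div hden h2X
  -- C
  have hC : HasDerivAt (fun Y : ℝ => ∫ t in (0:ℝ)..Y, mm t) (mm X) X := by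
    exact intervalIntegral.integral_hasDerivAt_right (mm_cont.intervalIntegrable 0 X)
      mm_cont.stronglyMeasurable.stronglyMeasurableAtFilter mm_cont.continuousAt
  have htot := (hA.neg.sub hB).add hC
  refine htot.congr_deriv ?_
  unfold ff mm
  rw [show Real.sin (2*X) - Real.sin (4*X)/2 = 4 * Real.sin X ^ 3 * Real.cos X from trig_id X]
  field_simp
  ring

lemma F_eq (X : ℝ) (hX : 0 < X) : (∫ t in (0:ℝ)..X, ff t) = RR X := by
  have key : ∀ a ∈ Set.Ioc (0:ℝ) X,
      (fun a => (∫ t in (0:ℝ)..a, ff t) - RR a) a = (∫ t in (0:ℝ)..X, ff t) - RR X := by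
    intro a ha
    have h1 : ∫ t in a..X, ff t = RR X - RR a := by
      apply intervalIntegral.integral_eq_sub_of_hasDerivAt
      · intro u hu
        rw [Set.uIcc_of_le ha.2] at hu
        exact RR_hasDeriv u (lt_of_lt_of_le ha.1 hu.1)
      · exact ff_cont.intervalIntegrable a X
    have h2 : (∫ t in (0:ℝ)..a, ff t) + (∫ t in a..X, ff t) = ∫ t in (0:ℝ)..X, ff t :=
      intervalIntegral.integral_add_adjacent_intervals (ff_cont.intervalIntegrable _ _)
        (ff_cont.intervalIntegrable _ _)
    simp only
    linarith
  have hmem : Set.Ioc (0:ℝ) X ∈ 𝓝[>] (0:ℝ) := Ioc_mem_nhdsGT hX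
  have hconst : Tendsto (fun a => (∫ t in (0:ℝ)..a, ff t) - RR a) (𝓝[>] (0:ℝ))
      (𝓝 ((∫ t in (0:ℝ)..X, ff t) - RR X)) := by
    apply Tendsto.congr' _ tendsto_const_nhds
    filter_upwards [hmem] with a ha
    exact (key a ha).symm
  have hzero : Tendsto (fun a => (∫ t in (0:ℝ)..a, ff t) - RR a) (𝓝[>] (0:ℝ)) (𝓝 0) := by
    have hF0 : Tendsto (fun a => ∫ t in (0:ℝ)..a, ff t) (𝓝[>] (0:ℝ)) (𝓝 0) := by
      have hc := (intervalIntegral.continuous_primitive (μ := volume)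
        (fun a b => ff_cont.intervalIntegrable a b) 0).tendsto 0
      simp only [intervalIntegral.integral_same] at hc
      exact hc.mono_left nhdsWithin_le_nhds
    have hRR0 : Tendsto RR (𝓝[>] (0:ℝ)) (𝓝 0) := by
      have t1 : Tendsto (fun Y : ℝ => Real.sin Y ^ 4 / (2*Y^2)) (𝓝[>] (0:ℝ)) (𝓝 0) := by
        apply squeeze_zero_norm (a := fun Y : ℝ => Y^2/2)
        · intro Y
          rcases eq_or_ne Y 0 with rfl | hY
          · simp
          · rw [Real.norm_eq_abs, abs_div, abs_of_pos (by positivity : (0:ℝ) < 2*Y^2),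
              div_le_iff₀ (by positivity)]
            have h6 : |Real.sin Y| ^ 4 ≤ |Y| ^ 4 :=
              pow_le_pow_left₀ (abs_nonneg _) Real.abs_sin_le_abs 4
            rw [abs_pow]
            nlinarith [sq_abs Y, sq_nonneg Y, abs_nonneg Y]
        · have : Tendsto (fun Y : ℝ => Y^2/2) (𝓝 (0:ℝ)) (𝓝 ((0:ℝ)^2/2)) :=
            ((continuous_pow 2).div_const 2).tendsto 0
          simp only [ne_eq, OfNat.ofNat_ne_zero, not_false_eq_true, zero_pow, zero_div] at this
          exact this.mono_left nhdsWithin_le_nhds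
      have t2 : Tendsto (fun Y : ℝ => (Real.sin (2*Y) - Real.sin (4*Y)/2) / (2*Y))
          (𝓝[>] (0:ℝ)) (𝓝 0) := by
        apply squeeze_zero_norm (a := fun Y : ℝ => 2*Y^2)
        · intro Y
          rw [trig_id Y]
          rcases eq_or_ne Y 0 with rfl | hY
          · simp
          · rw [Real.norm_eq_abs, abs_div]
            have h2 : (0:ℝ) < |2*Y| := abs_pos.mpr (mul_ne_zero two_ne_zero hY)
            rw [div_le_iff₀ h2]
            have h1 : |4 * Real.sin Y ^ 3 * Real.cos Y| ≤ 4 * |Y|^3 := by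
              rw [abs_mul, abs_mul]
              have hs : |Real.sin Y ^ 3| ≤ |Y|^3 := by
                rw [abs_pow]; exact pow_le_pow_left₀ (abs_nonneg _) Real.abs_sin_le_abs 3
              have hc : |Real.cos Y| ≤ 1 := Real.abs_cos_le_one Y
              have h40 : |(4:ℝ)| = 4 := by norm_num
              rw [h40]
              nlinarith [abs_nonneg (Real.sin Y ^ 3), abs_nonneg (Real.cos Y),
                pow_nonneg (abs_nonneg Y) 3]
            have h3 : |2*Y| = 2*|Y| := by rw [abs_mul]; norm_num
            have h5 : |Y|^3 = Y^2*|Y| := by rw [pow_succ, sq_abs]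
            rw [h3]
            nlinarith [abs_nonneg Y]
        · have : Tendsto (fun Y : ℝ => 2*Y^2) (𝓝 (0:ℝ)) (𝓝 (2*(0:ℝ)^2)) :=
            (continuous_const.mul (continuous_pow 2)).tendsto 0
          simp only [ne_eq, OfNat.ofNat_ne_zero, not_false_eq_true, zero_pow, mul_zero] at this
          exact this.mono_left nhdsWithin_le_nhds
      have t3 : Tendsto (fun Y : ℝ => ∫ t in (0:ℝ)..Y, mm t) (𝓝[>] (0:ℝ)) (𝓝 0) := by
        have hc := (intervalIntegral.continuous_primitive (μ := volume)
          (fun a b => mm_cont.intervalIntegrable a b) 0).tendsto 0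
        simp only [intervalIntegral.integral_same] at hc
        exact hc.mono_left nhdsWithin_le_nhds
      have := (t1.neg.sub t2).add t3
      unfold RR
      simpa only [neg_zero, sub_zero, add_zero] using this
    simpa using hF0.sub hRR0
  have := tendsto_nhds_unique hconst hzero
  linarith

theorem stmt_17 :
    Tendsto (fun X : ℝ => ∫ t in (0:ℝ)..X, (Real.sin t) ^ 4 / t ^ 3) atTop
      (nhds (Real.log 2)) := by
  have t1 : Tendsto (fun X : ℝ => Real.sin X ^ 4 / (2*X^2)) atTop (𝓝 0) := by
    apply squeeze_zero_norm (a := fun X : ℝ => (2*X^2)⁻¹)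
    · intro X
      rcases eq_or_ne X 0 with rfl | hX
      · simp
      · rw [Real.norm_eq_abs, abs_div, abs_of_pos (by positivity : (0:ℝ) < 2*X^2), inv_eq_one_div]
        gcongr
        rw [abs_pow]
        exact pow_le_one₀ (abs_nonneg _) (Real.abs_sin_le_one X)
    · exact tendsto_inv_atTop_zero.comp
        (Tendsto.const_mul_atTop two_pos (tendsto_pow_atTop two_ne_zero))
  have t2 : Tendsto (fun X : ℝ => (Real.sin (2*X) - Real.sin (4*X)/2) / (2*X)) atTop (𝓝 0) := by
    apply squeeze_zero_norm' (a := fun X : ℝ => X⁻¹)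
    · filter_upwards [eventually_ge_atTop (1:ℝ)] with X hX
      have hX0 : (0:ℝ) < X := by linarith
      rw [Real.norm_eq_abs, abs_div, abs_of_pos (by linarith : (0:ℝ) < 2*X), div_le_iff₀ (by linarith)]
      have h1 : |Real.sin (2*X) - Real.sin (4*X)/2| ≤ 3/2 := by
        have ha := Real.abs_sin_le_one (2*X)
        have hb := Real.abs_sin_le_one (4*X)
        have hc : |Real.sin (2*X) - Real.sin (4*X)/2| ≤ |Real.sin (2*X)| + |Real.sin (4*X)/2| :=
          abs_sub _ _
        have hd : |Real.sin (4*X)/2| = |Real.sin (4*X)|/2 := by rw [abs_div, abs_two]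
        rw [hd] at hc
        linarith
      have h2 : X⁻¹ * (2*X) = 2 := by field_simp
      linarith
    · exact tendsto_inv_atTop_zero
  have t3 : Tendsto (fun X : ℝ => Real.log 2 - ∫ u in (2*X)..(4*X), Real.cos u / u)
      atTop (𝓝 (Real.log 2)) := by
    simpa using (tendsto_const_nhds (α := ℝ) (x := Real.log 2)).sub E_tendsto
  have hlim : Tendsto (fun X : ℝ => -(Real.sin X ^ 4 / (2*X^2))
      - (Real.sin (2*X) - Real.sin (4*X)/2) / (2*X)
      + (Real.log 2 - ∫ u in (2*X)..(4*X), Real.cos u / u)) atTop (𝓝 (Real.log 2)) := by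
    have := (t1.neg.sub t2).add t3
    simpa using this
  apply Tendsto.congr' _ hlim
  filter_upwards [eventually_gt_atTop (0:ℝ)] with X hX
  have h1 : (∫ t in (0:ℝ)..X, (Real.sin t) ^ 4 / t ^ 3) = RR X := F_eq X hX
  rw [h1]
  unfold RR
  rw [C_eq X hX]
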